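/- Let M ≥ 0 and 0 < ρ ≤ 1/(2√(1 + M²)). Let x, y ∈ ℝ² and u, v ∈ ℝ² with ‖u‖ ≤ M and ‖v‖ ≤ M, and suppose ‖(x + t·u) − (y + t·v)‖ ≥ 1 for every t ∈ ℝ. Then the open ρ-neighborhoods in ℝ³ of the worldlines L_x = {(x + t·u, t) : t ∈ ℝ} and L_y = {(y + s·v, s) : s ∈ ℝ} are disjoint. -/
import Mathlib


/-- Space-time `ℝ³ = ℝ² × ℝ`, with the Euclidean norm `‖(p, t)‖ = √(‖p‖² + t²)`. -/
noncomputable abbrev SpaceTime : Type :=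
  WithLp 2 (EuclideanSpace ℝ (Fin 2) × ℝ)

/-- The space-time point `(p, t) ∈ ℝ² × ℝ`. -/
noncomputable def stPoint (p : EuclideanSpace ℝ (Fin 2)) (t : ℝ) : SpaceTime :=
  (WithLp.equiv 2 (EuclideanSpace ℝ (Fin 2) × ℝ)).symm (p, t)

/-- The worldline of a particle starting at `x` with velocity `u`. -/
noncomputable def worldline (x u : EuclideanSpace ℝ (Fin 2)) : Set SpaceTime :=
  {z : SpaceTime | ∃ t : ℝ, z = stPoint (x + t • u) t}

/-- If `‖u‖, ‖v‖ ≤ M`, the moving points `x + t·u` and `y + t·v` stay at distance at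
least `1` at all times, and `0 < ρ ≤ 1/(2√(1 + M²))`, then the open `ρ`-neighborhoods
of the two worldlines in space-time are disjoint. -/
theorem worldline_neighborhoods_disjoint (M ρ : ℝ) (hM : 0 ≤ M)
    (hρ₀ : 0 < ρ) (hρ : ρ ≤ 1 / (2 * Real.sqrt (1 + M ^ 2)))
    (x y u v : EuclideanSpace ℝ (Fin 2)) (hu : ‖u‖ ≤ M) (hv : ‖v‖ ≤ M)
    (hsep : ∀ t : ℝ, ‖(x + t • u) - (y + t • v)‖ ≥ 1) :
    Disjoint {z : SpaceTime | Metric.infDist z (worldline x u) < ρ}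
      {z : SpaceTime | Metric.infDist z (worldline y v) < ρ} := by
  rw [Set.disjoint_left]
  intro z hz1 hz2
  simp only [Set.mem_setOf_eq] at hz1 hz2
  have hne1 : (worldline x u).Nonempty := ⟨stPoint (x + (0:ℝ) • u) 0, 0, rfl⟩
  have hne2 : (worldline y v).Nonempty := ⟨stPoint (y + (0:ℝ) • v) 0, 0, rfl⟩
  obtain ⟨w1, hw1, hd1⟩ := (Metric.infDist_lt_iff hne1).1 hz1
  obtain ⟨w2, hw2, hd2⟩ := (Metric.infDist_lt_iff hne2).1 hz2
  obtain ⟨t, rfl⟩ := hw1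
  obtain ⟨s, rfl⟩ := hw2
  -- key: distance between the two worldline points is ≥ 1/√(1+M²) ≥ 2ρ
  set a : EuclideanSpace ℝ (Fin 2) := x + t • u
  set b : EuclideanSpace ℝ (Fin 2) := y + s • v
  have hM2 : (0:ℝ) < 1 + M ^ 2 := by positivity
  have hsq : Real.sqrt (1 + M ^ 2) > 0 := Real.sqrt_pos.2 hM2
  -- spatial separation bound
  have hS : ‖a - b‖ ≥ 1 - |t - s| * M := by
    have h1 : ‖(x + t • u) - (y + t • v)‖ ≥ 1 := hsep t
    have h2 : a - b = ((x + t • u) - (y + t • v)) - (s - t) • v := by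
      simp only [a, b]
      module
    have h3 : ‖(s - t) • v‖ ≤ |t - s| * M := by
      rw [norm_smul, Real.norm_eq_abs, abs_sub_comm]
      exact mul_le_mul_of_nonneg_left hv (abs_nonneg _)
    have h4 : ‖(x + t • u) - (y + t • v)‖ - ‖(s - t) • v‖ ≤ ‖a - b‖ := by
      rw [h2]; exact norm_sub_norm_le _ _ |>.trans (le_abs_self _) |>.trans (abs_norm _).le
    linarith
  -- distance formula in WithLp 2
  have hdist : dist (stPoint a t) (stPoint b s) ^ 2 = ‖a - b‖ ^ 2 + (t - s) ^ 2 := by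
    rw [WithLp.prod_dist_eq_of_L2]
    rw [Real.sq_sqrt (by positivity)]
    simp [stPoint, dist_eq_norm, Real.dist_eq, sq_abs]
  have hSnn : (0:ℝ) ≤ ‖a - b‖ := norm_nonneg _
  have hkey : dist (stPoint a t) (stPoint b s) ^ 2 ≥ 1 / (1 + M ^ 2) := by
    rw [hdist]
    rw [ge_iff_le, div_le_iff₀ hM2]
    nlinarith [sq_nonneg (‖a - b‖ * M - |t - s|), sq_abs (t - s), abs_nonneg (t - s),
      sq_nonneg (‖a - b‖ + |t - s| * M)]
  have hdge : dist (stPoint a t) (stPoint b s) ≥ 1 / Real.sqrt (1 + M ^ 2) := by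
    have h := Real.sqrt_le_sqrt hkey.le
    rwa [Real.sqrt_sq dist_nonneg, one_div, Real.sqrt_inv, ← one_div] at h
  have htri : dist (stPoint a t) (stPoint b s) < 2 * ρ := by
    calc dist (stPoint a t) (stPoint b s) ≤ dist (stPoint a t) z + dist z (stPoint b s) := dist_triangle _ _ _
      _ < ρ + ρ := by rw [dist_comm (stPoint a t) z]; linarith
      _ = 2 * ρ := by ring
  have h2ρ : 2 * ρ ≤ 1 / Real.sqrt (1 + M ^ 2) := by
    rw [le_div_iff₀ (by positivity)] at hρ
    rw [le_div_iff₀ hsq]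
    linarith
  linarith
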